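/- Let A, B be finite types. If X : Matrix (B × A) (B × A) ℂ is positive semidefinite and ρ : Matrix A A ℂ is positive semidefinite, then the link product X ⋆ ρ : Matrix B B ℂ is positive semidefinite. (Equivalently: the map M ↦ tr₂ (M * (1 ⊗ₖ ρᵀ)) sends positive semidefinite matrices to positive semidefinite matrices, so a channel applied via its Choi matrix to a state yields a positive matrix.) -/

import Mathlib

open Matrix Kronecker BigOperators
open scoped ComplexOrder

lemma posSemidef_sum {n ι : Type*} [Fintype n] (s : Finset ι)
    (f : ι → Matrix n n ℂ) (h : ∀ i ∈ s, (f i).PosSemidef) :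
    (∑ i ∈ s, f i).PosSemidef := by
  classical
  induction s using Finset.induction_on with
  | empty => simpa using Matrix.PosSemidef.zero
  | insert _ _ hni ih =>
    rename_i a t
    rw [Finset.sum_insert hni]
    exact (h a (Finset.mem_insert_self a t)).add
      (ih fun i hi => h i (Finset.mem_insert_of_mem hi))

/-- Link product of a bipartite matrix with a state. -/
noncomputable def linkState {S T : Type*} [Fintype T] (N : Matrix (S × T) (S × T) ℂ)
    (ρ : Matrix T T ℂ) : Matrix S S ℂ :=
  Matrix.of fun s s' => ∑ t, ∑ t', N (s, t) (s', t') * ρ t t'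

theorem stmt13 {A B : Type*} [Fintype A] [Fintype B]
    (X : Matrix (B × A) (B × A) ℂ) (ρ : Matrix A A ℂ)
    (hX : X.PosSemidef) (hρ : ρ.PosSemidef) :
    (linkState X ρ).PosSemidef := by
  classical
  open scoped MatrixOrder Matrix.Norms.L2Operator in
  obtain ⟨M, hM⟩ :=
    (CStarAlgebra.nonneg_iff_eq_star_mul_self.mp hρ.nonneg)
  rw [Matrix.star_eq_conjTranspose] at hM
  set E : A → Matrix (B × A) B ℂ :=
    fun k => Matrix.of fun p b => if p.1 = b then M k p.2 else 0 with hE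
  have hent : ∀ (k : A) (b b' : B), ((E k)ᴴ * X * (E k)) b b'
      = ∑ a, ∑ a', star (M k a) * X (b, a) (b', a') * M k a' := by
    intro k b b'
    simp only [Matrix.mul_apply, Matrix.conjTranspose_apply, hE, Matrix.of_apply,
      Fintype.sum_prod_type, apply_ite (star : ℂ → ℂ), star_zero,
      ite_mul, mul_ite, zero_mul, mul_zero, Finset.sum_ite_eq, Finset.sum_ite_eq',
      Finset.mem_univ, if_true, Finset.sum_mul, Finset.mul_sum]
    rw [Finset.sum_comm]
    simp only [Finset.sum_ite_eq', Finset.mem_univ, if_true]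
    refine Eq.trans (Finset.sum_congr rfl fun a' _ => ?_) Finset.sum_comm
    rw [Finset.sum_comm]
    simp only [Finset.sum_ite_eq', Finset.mem_univ, if_true]
  have key : linkState X ρ = ∑ k, (E k)ᴴ * X * (E k) := by
    ext b b'
    rw [Matrix.sum_apply]
    simp_rw [hent]
    simp only [linkState, Matrix.of_apply, hM, Matrix.mul_apply,
      Matrix.conjTranspose_apply, Finset.mul_sum]
    refine (Finset.sum_congr rfl fun a _ => Finset.sum_comm).trans ?_
    rw [Finset.sum_comm]
    refine Finset.sum_congr rfl fun k _ => Finset.sum_congr rfl fun a _ =>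
      Finset.sum_congr rfl fun a' _ => ?_
    ring
  rw [key]
  exact posSemidef_sum _ _ fun k _ => hX.conjTranspose_mul_mul_same (E k)
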